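/- arXiv:1404.0950 — 2 statements merged into one kernel-verified Lean document; each statement's English description precedes it below -/
import Mathlib

section
/- Let C = RM_q(s−1,d) and X = Aut(C). Then C is X-completely transitive: for each i with 0 ≤ i ≤ 2 (where 2 is the covering radius of C), the set C_i = {β : d(β,C) = i} is a single orbit of X acting on the vertices of H(q^d,q). -/
set_option linter.unusedSectionVars false
set_option linter.unusedVariables false
set_option linter.unnecessarySimpa false


variable {M Q : Type*}

/-- The set of entries in which two vertices of the Hamming graph differ. -/
def diffSet [Fintype M] [DecidableEq Q] (α β : M → Q) : Finset M :=
  Finset.univ.filter fun i => α i ≠ β i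

/-- `GammaSet α r` is the set of vertices at Hamming distance exactly `r` from `α`. -/
def GammaSet [Fintype M] [DecidableEq Q] (α : M → Q) (r : ℕ) : Set (M → Q) :=
  {β | hammingDist α β = r}

/-- The neighbour set `C₁` of a code `C`. -/
def neighbourSet [Fintype M] [DecidableEq Q] (C : Set (M → Q)) : Set (M → Q) :=
  {ν | ν ∉ C ∧ ∃ c ∈ C, hammingDist ν c = 1}

/-- An automorphism of the Hamming graph: a bijection of vertices preserving Hamming distance. -/
def IsAut [Fintype M] [DecidableEq Q] (x : (M → Q) ≃ (M → Q)) : Prop :=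
  ∀ a b, hammingDist (x a) (x b) = hammingDist a b

/-- An elusive triple `(C, α, x)`. -/
def IsElusiveTriple [Fintype M] [DecidableEq Q] (C : Set (M → Q)) (α : M → Q)
    (x : (M → Q) ≃ (M → Q)) : Prop :=
  IsAut x ∧ x '' neighbourSet C = neighbourSet C ∧ α ∈ C ∧ x α ∉ C

/-- A `(C,α,x)`-associate: a vertex in `Γ₂(α) ∩ C^x`. -/
def IsAssociate [Fintype M] [DecidableEq Q] (C : Set (M → Q)) (α : M → Q)
    (x : (M → Q) ≃ (M → Q)) (π : M → Q) : Prop :=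
  π ∈ GammaSet α 2 ∧ π ∈ x '' C

/-- `MC C π π' = |C ∩ Γ₂(π) ∩ Γ₂(π')|`, the number of mutual codewords. -/
noncomputable def MC [Fintype M] [DecidableEq Q] (C : Set (M → Q)) (π π' : M → Q) : ℕ :=
  (C ∩ GammaSet π 2 ∩ GammaSet π' 2).ncard

/-- The code `C` has minimum distance `δ`. -/
def HasMinDist [Fintype M] [DecidableEq Q] (C : Set (M → Q)) (δ : ℕ) : Prop :=
  IsLeast {d : ℕ | ∃ a ∈ C, ∃ b ∈ C, a ≠ b ∧ hammingDist a b = d} δ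

/-- `IsCodeDist C β k` says that `d(β, C) = k`. -/
def IsCodeDist [Fintype M] [DecidableEq Q] (C : Set (M → Q)) (β : M → Q) (k : ℕ) : Prop :=
  IsLeast {d : ℕ | ∃ γ ∈ C, hammingDist β γ = d} k

/-- `update2 α i j a b` is the vertex `γ(α|i,j|a,b)`. -/
def update2 [DecidableEq M] (α : M → Q) (i j : M) (a b : Q) : M → Q :=
  Function.update (Function.update α i a) j b

/-- `update3 α i j k a b c` is the vertex `γ(α|i,j,k|a,b,c)`. -/
def update3 [DecidableEq M] (α : M → Q) (i j k : M) (a b c : Q) : M → Q :=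
  Function.update (Function.update (Function.update α i a) j b) k c

/-- The Reed–Muller code `RM_q(s,d)` (with `s = (q-1)d - 1`): the dual of the repetition
code, i.e. all vertices of `H(q^d, q)` whose entries sum to zero. -/
def RMs (F : Type*) [Field F] [Fintype F] (d : ℕ) : Set ((Fin d → F) → F) :=
  {α | ∑ v : Fin d → F, α v = 0}

/-- The Reed–Muller code `RM_q(s-1,d)` (with `s = (q-1)d - 1`): the members `α` of
`RM_q(s,d)` which additionally satisfy `∑_{v ∈ M} α_v • v = 0`. -/
def RMs1 (F : Type*) [Field F] [Fintype F] (d : ℕ) : Set ((Fin d → F) → F) :=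
  {α | ∑ v : Fin d → F, α v = 0 ∧ ∑ v : Fin d → F, α v • v = 0}

section GLtrans
variable {K V : Type*} [Field K] [AddCommGroup V] [Module K V] [FiniteDimensional K V]

/-- GL acts transitively on nonzero vectors. -/
lemma exists_linearEquiv_map_eq {w w' : V} (hw : w ≠ 0) (hw' : w' ≠ 0) :
    ∃ e : V ≃ₗ[K] V, e w = w' := by
  classical
  have h1 : LinearIndepOn K id ({w} : Set V) :=
    (linearIndepOn_singleton_iff K).mpr hw
  have h2 : LinearIndepOn K id ({w'} : Set V) :=
    (linearIndepOn_singleton_iff K).mpr hw'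
  let b1 := Module.Basis.extend h1
  let b2 := Module.Basis.extend h2
  have hm1 : w ∈ h1.extend (Set.subset_univ _) :=
    h1.subset_extend _ (Set.mem_singleton w)
  have hm2 : w' ∈ h2.extend (Set.subset_univ _) :=
    h2.subset_extend _ (Set.mem_singleton w')
  let e0 := b1.indexEquiv b2
  let e := e0.trans (Equiv.swap (e0 ⟨w, hm1⟩) ⟨w', hm2⟩)
  refine ⟨b1.equiv b2 e, ?_⟩
  have : (b1 ⟨w, hm1⟩ : V) = w := Module.Basis.extend_apply_self h1 _
  have he : e ⟨w, hm1⟩ = ⟨w', hm2⟩ := by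
    simp only [e, Equiv.trans_apply, Equiv.swap_apply_left]
  calc (b1.equiv b2 e) w = (b1.equiv b2 e) (b1 ⟨w, hm1⟩) := congrArg _ this.symm
    _ = b2 (e ⟨w, hm1⟩) := b1.equiv_apply _ b2 e
    _ = w' := by rw [he]; exact Module.Basis.extend_apply_self h2 _
end GLtrans

section Main
variable {F : Type*} [Field F] [Fintype F] [DecidableEq F] {d : ℕ}

/-- first syndrome -/
def rmS1 (α : (Fin d → F) → F) : F := ∑ v, α v
/-- second syndrome -/
def rmS2 (α : (Fin d → F) → F) : Fin d → F := ∑ v, α v • v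

lemma mem_rms1 {α : (Fin d → F) → F} : α ∈ RMs1 F d ↔ rmS1 α = 0 ∧ rmS2 α = 0 := Iff.rfl

@[simp] lemma rmS1_zero : rmS1 (0 : (Fin d → F) → F) = 0 := by simp [rmS1]
@[simp] lemma rmS2_zero : rmS2 (0 : (Fin d → F) → F) = 0 := by simp [rmS2]

lemma rmS1_sub (α β : (Fin d → F) → F) : rmS1 (α - β) = rmS1 α - rmS1 β := by
  simp [rmS1, Finset.sum_sub_distrib]

lemma rmS2_sub (α β : (Fin d → F) → F) : rmS2 (α - β) = rmS2 α - rmS2 β := by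
  simp [rmS2, sub_smul, Finset.sum_sub_distrib]

lemma rmS1_single (u : Fin d → F) (a : F) : rmS1 (Pi.single u a) = a := by
  simp [rmS1, Pi.single_apply]

lemma rmS2_single (u : Fin d → F) (a : F) : rmS2 (Pi.single u a) = a • u := by
  simp [rmS2, Pi.single_apply, ite_smul]

lemma hn_single {a : F} (ha : a ≠ 0) (u : Fin d → F) :
    hammingNorm (Pi.single u a : (Fin d → F) → F) = 1 := by
  unfold hammingNorm
  rw [Finset.card_eq_one]
  refine ⟨u, ?_⟩
  ext i
  simp only [Finset.mem_filter, Finset.mem_univ, true_and, Finset.mem_singleton, ne_eq]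
  constructor
  · intro h; by_contra hiu; rw [Pi.single_eq_of_ne hiu] at h; exact h rfl
  · rintro rfl; rw [Pi.single_eq_same]; exact ha

lemma hn_pair {a b : F} (ha : a ≠ 0) (hb : b ≠ 0) {u u' : Fin d → F} (huu : u ≠ u') :
    hammingNorm ((Pi.single u a : (Fin d → F) → F) - Pi.single u' b) = 2 := by
  unfold hammingNorm
  rw [Finset.card_eq_two]
  refine ⟨u, u', huu, ?_⟩
  ext i
  simp only [Finset.mem_filter, Finset.mem_univ, true_and, Finset.mem_insert,
    Finset.mem_singleton, Pi.sub_apply, ne_eq]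
  rcases eq_or_ne i u with rfl | hiu
  · rw [Pi.single_eq_same, Pi.single_eq_of_ne huu]
    simp [ha]
  · rcases eq_or_ne i u' with rfl | hiu'
    · rw [Pi.single_eq_same, Pi.single_eq_of_ne hiu]
      simp [hb, hiu]
    · rw [Pi.single_eq_of_ne hiu, Pi.single_eq_of_ne hiu']
      simp [hiu, hiu']

lemma eq_single_of_hn_one {x : (Fin d → F) → F} (h : hammingNorm x = 1) :
    ∃ u, x u ≠ 0 ∧ x = Pi.single u (x u) := by
  obtain ⟨u, hu⟩ := Finset.card_eq_one.mp h
  have hmem : ∀ i, x i ≠ 0 ↔ i = u := by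
    intro i
    rw [← Finset.mem_singleton, ← hu]
    simp [hammingNorm]
  refine ⟨u, (hmem u).mpr rfl, funext fun i => ?_⟩
  rcases eq_or_ne i u with rfl | hiu
  · rw [Pi.single_eq_same]
  · rw [Pi.single_eq_of_ne hiu]
    by_contra hxi
    exact hiu ((hmem i).mp hxi)

/-- distance 0 characterization -/
lemma codeDist0 {β : (Fin d → F) → F} (h1 : rmS1 β = 0) (h2 : rmS2 β = 0) :
    IsCodeDist (RMs1 F d) β 0 :=
  ⟨⟨β, ⟨h1, h2⟩, hammingDist_self β⟩, fun n _ => Nat.zero_le n⟩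

lemma notmem_of_syn1 {β : (Fin d → F) → F} (h1 : rmS1 β ≠ 0) : β ∉ RMs1 F d :=
  fun h => h1 h.1

lemma rm_dist_pos {β : (Fin d → F) → F} (hβ : β ∉ RMs1 F d) :
    ∀ n ∈ {m : ℕ | ∃ γ ∈ RMs1 F d, hammingDist β γ = m}, 1 ≤ n := by
  rintro n ⟨γ, hγ, hn⟩
  rw [Nat.one_le_iff_ne_zero]
  rintro rfl
  exact hβ (hammingDist_eq_zero.mp hn ▸ hγ)

/-- distance 1 characterization -/
lemma codeDist1 {β : (Fin d → F) → F} (h1 : rmS1 β ≠ 0) :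
    IsCodeDist (RMs1 F d) β 1 := by
  constructor
  · refine ⟨β - Pi.single ((rmS1 β)⁻¹ • rmS2 β) (rmS1 β), mem_rms1.mpr ⟨?_, ?_⟩, ?_⟩
    · rw [rmS1_sub, rmS1_single, sub_self]
    · rw [rmS2_sub, rmS2_single, smul_smul, mul_inv_cancel₀ h1, one_smul, sub_self]
    · rw [hammingDist_comm, hammingDist_eq_hammingNorm, neg_sub, sub_add_cancel, hn_single h1]
  · exact rm_dist_pos (notmem_of_syn1 h1)

/-- distance 2 characterization -/
lemma codeDist2 {β : (Fin d → F) → F} (h1 : rmS1 β = 0) (h2 : rmS2 β ≠ 0) :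
    IsCodeDist (RMs1 F d) β 2 := by
  constructor
  · refine ⟨β - (Pi.single (rmS2 β) 1 - Pi.single 0 1), mem_rms1.mpr ⟨?_, ?_⟩, ?_⟩
    · rw [rmS1_sub, rmS1_sub, rmS1_single, rmS1_single, sub_self, sub_zero, h1]
    · rw [rmS2_sub, rmS2_sub, rmS2_single, rmS2_single, one_smul, one_smul]
      simp
    · rw [hammingDist_comm, hammingDist_eq_hammingNorm, neg_sub, sub_add_cancel, hn_pair one_ne_zero one_ne_zero h2]
  · rintro n ⟨γ, hγ, hn⟩
    by_contra hlt
    push_neg at hlt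
    interval_cases n
    · exact (h2 (hammingDist_eq_zero.mp hn ▸ hγ.2)) 
    · rw [hammingDist_eq_hammingNorm] at hn
      obtain ⟨u, hu, hx⟩ := eq_single_of_hn_one hn
      have hγ1 : rmS1 γ = 0 := hγ.1
      have : rmS1 (-β + γ) = 0 := by rw [← sub_eq_neg_add, rmS1_sub, h1, hγ1, sub_zero]
      rw [hx, rmS1_single] at this
      exact hu this
end Main

section Aut
variable {F : Type*} [Field F] [Fintype F] [DecidableEq F] {d : ℕ}

/-- the affine coordinate permutation `v ↦ A v + t`. -/
def affPerm (A : (Fin d → F) ≃ₗ[F] (Fin d → F)) (t : Fin d → F) : (Fin d → F) ≃ (Fin d → F) :=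
  A.toEquiv.trans (Equiv.addRight t)

@[simp] lemma affPerm_apply (A : (Fin d → F) ≃ₗ[F] (Fin d → F)) (t v : Fin d → F) :
    affPerm A t v = A v + t := rfl

@[simp] lemma affPerm_symm_apply (A : (Fin d → F) ≃ₗ[F] (Fin d → F)) (t v : Fin d → F) :
    (affPerm A t).symm v = A.symm (v - t) := by
  simp [affPerm, Equiv.symm_trans_apply, sub_eq_add_neg]

/-- the candidate automorphism `α ↦ λ·(α ∘ g⁻¹) + c`. -/
def autX (A : (Fin d → F) ≃ₗ[F] (Fin d → F)) (t : Fin d → F) {lam : F} (hlam : lam ≠ 0)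
    (c : (Fin d → F) → F) : ((Fin d → F) → F) ≃ ((Fin d → F) → F) where
  toFun α := fun v => lam * α ((affPerm A t).symm v) + c v
  invFun α := fun v => lam⁻¹ * (α (affPerm A t v) - c (affPerm A t v))
  left_inv α := by
    funext v
    simp only [Equiv.symm_apply_apply, add_sub_cancel_right]
    rw [inv_mul_cancel_left₀ hlam]
  right_inv α := by
    funext v
    simp only [Equiv.apply_symm_apply]
    rw [mul_inv_cancel_left₀ hlam, sub_add_cancel]

lemma hammingDist_comp_right {ι κ : Type*} [Fintype ι] [Fintype κ] [DecidableEq ι]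
    [DecidableEq κ] (g : ι ≃ κ) (α β : κ → F) :
    hammingDist (α ∘ g) (β ∘ g) = hammingDist α β := by
  unfold hammingDist
  apply Finset.card_bij' (fun a _ => g a) (fun b _ => g.symm b) <;>
    simp [Function.comp]

lemma hammingDist_affine_values {ι : Type*} [Fintype ι] {lam : F} (hlam : lam ≠ 0)
    (c x y : ι → F) :
    hammingDist (fun v => lam * x v + c v) (fun v => lam * y v + c v) = hammingDist x y := by
  unfold hammingDist
  congr 1
  apply Finset.filter_congr
  intro v _
  simp only [ne_eq, add_left_inj]
  exact not_congr (mul_right_inj' hlam)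

lemma isAut_autX (A : (Fin d → F) ≃ₗ[F] (Fin d → F)) (t : Fin d → F) {lam : F}
    (hlam : lam ≠ 0) (c : (Fin d → F) → F) : IsAut (autX A t hlam c) := by
  intro a b
  calc hammingDist (autX A t hlam c a) (autX A t hlam c b)
      = hammingDist (a ∘ (affPerm A t).symm) (b ∘ (affPerm A t).symm) :=
        hammingDist_affine_values hlam c _ _
    _ = hammingDist a b := hammingDist_comp_right _ a b

lemma rmS1_autX (A : (Fin d → F) ≃ₗ[F] (Fin d → F)) (t : Fin d → F) {lam : F}
    (hlam : lam ≠ 0) (c β : (Fin d → F) → F) :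
    rmS1 (autX A t hlam c β) = lam * rmS1 β + rmS1 c := by
  show ∑ v, (lam * β ((affPerm A t).symm v) + c v) = lam * rmS1 β + rmS1 c
  rw [Finset.sum_add_distrib, ← Finset.mul_sum]
  congr 2
  exact Equiv.sum_comp (affPerm A t).symm β

lemma rmS2_autX (A : (Fin d → F) ≃ₗ[F] (Fin d → F)) (t : Fin d → F) {lam : F}
    (hlam : lam ≠ 0) (c β : (Fin d → F) → F) :
    rmS2 (autX A t hlam c β) = lam • (A (rmS2 β) + rmS1 β • t) + rmS2 c := by
  show ∑ v, (lam * β ((affPerm A t).symm v) + c v) • v = _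
  simp_rw [add_smul]
  rw [Finset.sum_add_distrib]
  congr 1
  have key : ∑ v, β ((affPerm A t).symm v) • v = A (rmS2 β) + rmS1 β • t := by
    rw [← Equiv.sum_comp (affPerm A t) (fun v => β ((affPerm A t).symm v) • v)]
    simp only [Equiv.symm_apply_apply]
    simp only [affPerm_apply]
    simp_rw [smul_add]
    rw [Finset.sum_add_distrib]
    congr 1
    · rw [rmS2, map_sum]
      simp_rw [map_smul]
    · rw [rmS1, ← Finset.sum_smul]
  have hms : ∀ v : Fin d → F, (lam * β ((affPerm A t).symm v)) • v
      = lam • (β ((affPerm A t).symm v) • v) := fun v => mul_smul _ _ _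
  rw [Finset.sum_congr rfl (fun v _ => hms v), ← Finset.smul_sum, key]

lemma autX_mem (A : (Fin d → F) ≃ₗ[F] (Fin d → F)) (t : Fin d → F) {lam : F}
    (hlam : lam ≠ 0) {c : (Fin d → F) → F} (hc : c ∈ RMs1 F d) {β : (Fin d → F) → F}
    (hβ : β ∈ RMs1 F d) : autX A t hlam c β ∈ RMs1 F d := by
  rw [mem_rms1] at *
  obtain ⟨hb1, hb2⟩ := hβ
  obtain ⟨hc1, hc2⟩ := hc
  constructor
  · rw [rmS1_autX A t hlam, hb1, hc1, mul_zero, add_zero]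
  · simp [rmS2_autX A t hlam, hb1, hb2, hc2]

lemma autX_image (A : (Fin d → F) ≃ₗ[F] (Fin d → F)) (t : Fin d → F) {lam : F}
    (hlam : lam ≠ 0) {c : (Fin d → F) → F} (hc : c ∈ RMs1 F d) :
    (autX A t hlam c) '' RMs1 F d = RMs1 F d := by
  refine Set.eq_of_subset_of_ncard_le ?_ ?_ (Set.toFinite _)
  · rintro _ ⟨a, ha, rfl⟩
    exact autX_mem A t hlam hc ha
  · rw [Set.ncard_image_of_injective _ (autX A t hlam c).injective]

lemma exists_aut_map (A : (Fin d → F) ≃ₗ[F] (Fin d → F)) (t : Fin d → F) {lam : F}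
    (hlam : lam ≠ 0) (β γ : (Fin d → F) → F)
    (h1 : rmS1 γ = lam * rmS1 β) (h2 : rmS2 γ = lam • (A (rmS2 β) + rmS1 β • t)) :
    ∃ x : ((Fin d → F) → F) ≃ ((Fin d → F) → F), IsAut x ∧
      x '' RMs1 F d = RMs1 F d ∧ x β = γ := by
  set c : (Fin d → F) → F := fun v => γ v - lam * β ((affPerm A t).symm v) with hc
  have hceq : c = γ - autX A t hlam 0 β := by
    funext v
    simp [hc, autX]
  have hcC : c ∈ RMs1 F d := by
    rw [mem_rms1, hceq]
    constructor
    · rw [rmS1_sub, rmS1_autX A t hlam, rmS1_zero, add_zero, h1, sub_self]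
    · rw [rmS2_sub, rmS2_autX A t hlam, rmS2_zero, add_zero, h2, sub_self]
  refine ⟨autX A t hlam c, isAut_autX A t hlam c, autX_image A t hlam hcC, ?_⟩
  funext v
  show lam * β ((affPerm A t).symm v) + c v = γ v
  rw [hc]
  ring

lemma syn_of_cd0 {β : (Fin d → F) → F} (h : IsCodeDist (RMs1 F d) β 0) :
    rmS1 β = 0 ∧ rmS2 β = 0 := by
  obtain ⟨⟨γ, hγ, hdist⟩, -⟩ := h
  rw [hammingDist_eq_zero] at hdist
  subst hdist
  exact hγ

lemma syn_of_cd1 {β : (Fin d → F) → F} (h : IsCodeDist (RMs1 F d) β 1) :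
    rmS1 β ≠ 0 := by
  intro hs
  by_cases h2 : rmS2 β = 0
  · exact one_ne_zero (h.unique (codeDist0 hs h2))
  · exact (by norm_num : (1:ℕ) ≠ 2) (h.unique (codeDist2 hs h2))

lemma syn_of_cd2 {β : (Fin d → F) → F} (h : IsCodeDist (RMs1 F d) β 2) :
    rmS1 β = 0 ∧ rmS2 β ≠ 0 := by
  by_cases h1 : rmS1 β = 0
  · refine ⟨h1, fun h2 => ?_⟩
    exact (by norm_num : (2:ℕ) ≠ 0) (h.unique (codeDist0 h1 h2))
  · exact absurd (h.unique (codeDist1 h1)) (by norm_num)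

end Aut

/-- `C = RM_q(s-1,d)` is `Aut(C)`-completely transitive: for each
`0 ≤ i ≤ 2` (where 2 is the covering radius), the set `C_i = {β | d(β,C) = i}` is a
single orbit of the automorphism group of `C`. -/
theorem stmt_18 (F : Type) [Field F] [Fintype F] [DecidableEq F] (d : ℕ) (hd : 1 ≤ d)
    (hdq : (d, Fintype.card F) ≠ (1, 2)) :
    ∀ i : ℕ, i ≤ 2 →
      (∃ β : (Fin d → F) → F, IsCodeDist (RMs1 F d) β i) ∧
      (∀ β γ : (Fin d → F) → F, IsCodeDist (RMs1 F d) β i → IsCodeDist (RMs1 F d) γ i →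
        ∃ x : ((Fin d → F) → F) ≃ ((Fin d → F) → F), IsAut x ∧
          x '' RMs1 F d = RMs1 F d ∧ x β = γ) := by
  intro i hi
  interval_cases i
  · refine ⟨⟨0, codeDist0 rmS1_zero rmS2_zero⟩, fun β γ hβ hγ => ?_⟩
    obtain ⟨hb1, hb2⟩ := syn_of_cd0 hβ
    obtain ⟨hg1, hg2⟩ := syn_of_cd0 hγ
    refine exists_aut_map (LinearEquiv.refl F _) 0 one_ne_zero β γ ?_ ?_
    · rw [hb1, hg1, mul_zero]
    · rw [hb2, hg2]
      simp
  · constructor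
    · refine ⟨Pi.single 0 1, codeDist1 ?_⟩
      rw [rmS1_single]
      exact one_ne_zero
    · intro β γ hβ hγ
      have hb := syn_of_cd1 hβ
      have hg := syn_of_cd1 hγ
      refine exists_aut_map (LinearEquiv.refl F _)
        ((rmS1 γ)⁻¹ • rmS2 γ - (rmS1 β)⁻¹ • rmS2 β)
        (mul_ne_zero hg (inv_ne_zero hb)) β γ ?_ ?_
      · field_simp
      · simp only [LinearEquiv.refl_apply]
        match_scalars <;> field_simp <;> ring
  · constructor
    · have hwne : (fun _ => (1:F) : Fin d → F) ≠ 0 := by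
        intro h
        have := congrFun h ⟨0, hd⟩
        simp at this
      refine ⟨Pi.single (fun _ => (1:F)) 1 - Pi.single 0 1, codeDist2 ?_ ?_⟩
      · rw [rmS1_sub, rmS1_single, rmS1_single, sub_self]
      · rw [rmS2_sub, rmS2_single, rmS2_single, one_smul, one_smul]
        simpa using hwne
    · intro β γ hβ hγ
      obtain ⟨hb1, hb2⟩ := syn_of_cd2 hβ
      obtain ⟨hg1, hg2⟩ := syn_of_cd2 hγ
      obtain ⟨A, hA⟩ := exists_linearEquiv_map_eq (K := F) hb2 hg2
      refine exists_aut_map A 0 one_ne_zero β γ ?_ ?_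
      · rw [hb1, hg1, mul_zero]
      · simp [hA, hb1]
end

section
/- Let C = RM_q(s−1,d), let (C,α,x) be an elusive triple, and let π be a (C,α,x)-associate. Then: (i) if q ≡ 0 (mod 3), there are at most two (C,α,x)-associates π' with MC(π,π') = 3; (ii) if q ≡ 1 (mod 3), there are at most four (C,α,x)-associates π' with MC(π,π') = 3; (iii) if q ≡ 2 (mod 3), there are no (C,α,x)-associates π' with MC(π,π') = 3. -/
variable {M Q : Type*}

namespace ElusiveAux
open Finset
section A
variable {F : Type*} [Field F] [DecidableEq F] {ι : Type*} [Fintype ι] [DecidableEq ι]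

def wtt (η : ι → F) : ℕ := (univ.filter fun i => η i ≠ 0).card
def dip (c : F) (u v : ι) : ι → F := fun i => if i = u then c else if i = v then -c else 0


theorem hammingDist_eq_wtt (β γ : ι → F) : hammingDist β γ = wtt (β - γ) := by
  unfold wtt hammingDist
  congr 1; ext i; simp [sub_ne_zero]

theorem wtt_neg (η : ι → F) : wtt (-η) = wtt η := by
  unfold wtt; congr 1; ext i; simp

theorem hammingDist_eq_wtt' (β γ : ι → F) : hammingDist β γ = wtt (γ - β) := by
  rw [hammingDist_eq_wtt, ← wtt_neg, neg_sub]

theorem dip_self (c : F) (u v : ι) : dip c u v u = c := by simp [dip]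
theorem dip_other {u v : ι} (c : F) (h : u ≠ v) : dip c u v v = -c := by
  simp [dip, h.symm]
theorem dip_apply_ne {u v i : ι} (c : F) (hu : i ≠ u) (hv : i ≠ v) : dip c u v i = 0 := by
  simp [dip, hu, hv]


theorem dip_neg_swap {u v : ι} (c : F) (h : u ≠ v) : dip (-c) v u = dip c u v := by
  funext i
  rcases eq_or_ne i u with rfl | hu
  · simp [dip, h, h.symm]
  rcases eq_or_ne i v with rfl | hv
  · simp [dip, h, hu]
  · simp [dip, hu, hv]


theorem supp_dip {c : F} {u v : ι} (hc : c ≠ 0) (h : u ≠ v) :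
    (univ.filter fun i => dip c u v i ≠ 0) = {u, v} := by
  ext i
  simp only [mem_filter, mem_univ, true_and, mem_insert, mem_singleton]
  constructor
  · intro hi
    by_contra hcon
    push_neg at hcon
    exact hi (dip_apply_ne c hcon.1 hcon.2)
  · rintro (rfl | rfl)
    · rw [dip_self]; exact hc
    · rw [dip_other c h]; simpa using hc

theorem wtt_dip {c : F} {u v : ι} (hc : c ≠ 0) (h : u ≠ v) : wtt (dip c u v) = 2 := by
  rw [wtt, supp_dip hc h, card_insert_of_notMem (by simpa using h), card_singleton]

theorem sum_eq_pair {G : Type*} [AddCommMonoid G] {u v : ι} (f : ι → G) (h : u ≠ v)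
    (hf : ∀ i, i ≠ u → i ≠ v → f i = 0) : ∑ i, f i = f u + f v := by
  rw [← Finset.sum_subset (subset_univ {u, v})]
  · rw [Finset.sum_insert (by simpa using h), Finset.sum_singleton]
  · intro i _ hi
    simp only [mem_insert, mem_singleton] at hi
    push_neg at hi
    exact hf i hi.1 hi.2


theorem sum_dip {u v : ι} (c : F) (h : u ≠ v) : ∑ i, dip c u v i = 0 := by
  rw [sum_eq_pair _ h (fun i h1 h2 => dip_apply_ne c h1 h2), dip_self, dip_other c h,
    add_neg_cancel]

theorem sum_eq_triple {G : Type*} [AddCommMonoid G] {u v w : ι} (f : ι → G)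
    (huv : u ≠ v) (huw : u ≠ w) (hvw : v ≠ w)
    (hf : ∀ i, i ≠ u → i ≠ v → i ≠ w → f i = 0) : ∑ i, f i = f u + f v + f w := by
  rw [← Finset.sum_subset (subset_univ {u, v, w})]
  · rw [Finset.sum_insert (by simp [huv, huw]), Finset.sum_insert (by simpa using hvw),
      Finset.sum_singleton, add_assoc]
  · intro i _ hi
    simp only [mem_insert, mem_singleton] at hi
    push_neg at hi
    exact hf i hi.1 hi.2.1 hi.2.2

theorem wtt_one_sum_ne {η : ι → F} (h : wtt η = 1) : ∑ i, η i ≠ 0 := by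
  obtain ⟨j, hj⟩ := Finset.card_eq_one.mp h
  have hjmem : j ∈ univ.filter fun i => η i ≠ 0 := by rw [hj]; exact mem_singleton_self j
  have hηj : η j ≠ 0 := (mem_filter.mp hjmem).2
  have hoff : ∀ i, i ≠ j → η i = 0 := by
    intro i hi
    by_contra hcon
    have : i ∈ univ.filter fun i => η i ≠ 0 := mem_filter.mpr ⟨mem_univ i, hcon⟩
    rw [hj, mem_singleton] at this
    exact hi this
  have : ∑ i, η i = η j := by
    rw [← Finset.sum_subset (subset_univ {j}), Finset.sum_singleton]
    intro i _ hi
    exact hoff i (by simpa using hi)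
  rw [this]; exact hηj

theorem supp_off {η : ι → F} {s : Finset ι} (h : (univ.filter fun i => η i ≠ 0) = s)
    {i : ι} (hi : i ∉ s) : η i = 0 := by
  by_contra hcon
  exact hi (h ▸ mem_filter.mpr ⟨mem_univ i, hcon⟩)

theorem wt2_struct {η : ι → F} (h2 : wtt η = 2) (hs : ∑ i, η i = 0) :
    ∃ c u v, c ≠ 0 ∧ u ≠ v ∧ η = dip c u v := by
  obtain ⟨u, v, huv, hst⟩ := Finset.card_eq_two.mp h2
  have hu : η u ≠ 0 := by
    have : u ∈ univ.filter fun i => η i ≠ 0 := by rw [hst]; simp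
    exact (mem_filter.mp this).2
  have hoff : ∀ i, i ≠ u → i ≠ v → η i = 0 := fun i h1 h2 =>
    supp_off hst (by simp [h1, h2])
  have hsum := sum_eq_pair η huv hoff
  rw [hs] at hsum
  refine ⟨η u, u, v, hu, huv, funext fun i => ?_⟩
  rcases eq_or_ne i u with rfl | h1
  · rw [dip_self]
  rcases eq_or_ne i v with rfl | h2
  · rw [dip_other _ huv]; linear_combination -hsum
  · rw [dip_apply_ne _ h1 h2]; exact hoff i h1 h2

theorem wtt_le_pair {η : ι → F} {s t : ι} (h : ∀ i, i ≠ s → i ≠ t → η i = 0) : wtt η ≤ 2 := by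
  have : (univ.filter fun i => η i ≠ 0) ⊆ {s, t} := by
    intro i hi
    simp only [mem_filter] at hi
    by_contra hcon
    simp only [mem_insert, mem_singleton] at hcon
    push_neg at hcon
    exact hi.2 (h i hcon.1 hcon.2)
  calc wtt η ≤ ({s, t} : Finset ι).card := card_le_card this
    _ ≤ 2 := card_insert_le _ _ |>.trans (by simp)

theorem wtt_le_triple {η : ι → F} {i₁ i₂ i₃ : ι} (h : ∀ i, i ≠ i₁ → i ≠ i₂ → i ≠ i₃ → η i = 0) :
    wtt η ≤ 3 := by
  have hsub : (univ.filter fun i => η i ≠ 0) ⊆ {i₁, i₂, i₃} := by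
    intro i hi
    simp only [mem_filter] at hi
    by_contra hcon
    simp only [mem_insert, mem_singleton] at hcon
    push_neg at hcon
    exact hi.2 (h i hcon.1 hcon.2.1 hcon.2.2)
  calc wtt η ≤ ({i₁, i₂, i₃} : Finset ι).card := card_le_card hsub
    _ ≤ 3 := (card_insert_le _ _).trans (by
        have := card_insert_le i₂ ({i₃} : Finset ι)
        simp only [card_singleton] at this
        omega)

theorem supp2 {η : ι → F} {a : F} {u v : ι} (ha : a ≠ 0) (huv : u ≠ v)
    (h3 : wtt η = 3) (h2 : wtt (η - dip a u v) = 2) :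
    ∃ w, w ≠ u ∧ w ≠ v ∧ η w ≠ 0 ∧ (univ.filter fun i => η i ≠ 0) = {u, v, w} ∧
      ((η u = a ∧ η v ≠ -a) ∨ (η u ≠ a ∧ η v = -a)) := by
  set s := univ.filter fun i => η i ≠ 0 with hs
  set T := univ.filter fun i => (η - dip a u v) i ≠ 0 with hT
  have hTcard : T.card = 2 := h2
  have hscard : s.card = 3 := h3
  have hmemT : ∀ i, i ∈ T ↔ η i ≠ dip a u v i := by
    intro i; simp only [hT, mem_filter, mem_univ, true_and, Pi.sub_apply, sub_ne_zero]
  have hmems : ∀ i, i ∈ s ↔ η i ≠ 0 := by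
    intro i; simp only [hs, mem_filter, mem_univ, true_and]
  have claim1 : ∀ i, i ∈ s → i ≠ u → i ≠ v → i ∈ T := by
    intro i hi h1 h2
    rw [hmemT i, dip_apply_ne _ h1 h2]
    exact (hmems i).mp hi
  -- u ∈ s
  have husv : ∀ y z : ι, y ≠ z → ({y, z} : Finset ι).card ≤ 2 := by
    intro y z h; rw [card_insert_of_notMem (by simpa using h), card_singleton]
  have key : ∀ (y z : ι), y ≠ z → ((y = u ∧ z = v) ∨ (y = v ∧ z = u)) →
      η y = 0 → False := by
    intro y z hyz hcase hηy
    have hyT : y ∈ T := by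
      rw [hmemT y]
      rcases hcase with ⟨rfl, rfl⟩ | ⟨rfl, rfl⟩
      · rw [dip_self, hηy]; exact fun h => ha h.symm
      · rw [dip_other _ huv, hηy]; intro h; exact ha (by linear_combination h)
    -- s \ {u,v} has card ≥ 2
    have hsub1 : s ⊆ (s \ {u, v}) ∪ {z} := by
      intro i hi
      rcases eq_or_ne i u with rfl | h1
      · rcases hcase with ⟨rfl, rfl⟩ | ⟨rfl, rfl⟩
        · exact absurd ((hmems _).mp hi) (not_not.mpr hηy)
        · exact mem_union_right _ (mem_singleton_self _)
      rcases eq_or_ne i v with rfl | h2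
      · rcases hcase with ⟨rfl, rfl⟩ | ⟨rfl, rfl⟩
        · exact mem_union_right _ (mem_singleton_self _)
        · exact absurd ((hmems _).mp hi) (not_not.mpr hηy)
      · exact mem_union_left _ (mem_sdiff.mpr ⟨hi, by simp [h1, h2]⟩)
    have hc1 : s.card ≤ (s \ {u, v}).card + 1 := by
      calc s.card ≤ ((s \ {u, v}) ∪ {z}).card := card_le_card hsub1
        _ ≤ (s \ {u, v}).card + ({z} : Finset ι).card := card_union_le _ _
        _ = (s \ {u, v}).card + 1 := by rw [card_singleton]
    have hsub2 : s \ {u, v} ⊆ T.erase y := by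
      intro i hi
      rw [mem_sdiff] at hi
      simp only [mem_insert, mem_singleton] at hi
      push_neg at hi
      refine mem_erase.mpr ⟨?_, claim1 i hi.1 hi.2.1 hi.2.2⟩
      rcases hcase with ⟨rfl, rfl⟩ | ⟨rfl, rfl⟩
      · exact hi.2.1
      · exact hi.2.2
    have hc2 : (T.erase y).card = 1 := by rw [card_erase_of_mem hyT, hTcard]
    have := card_le_card hsub2
    omega
  have hu : η u ≠ 0 := fun h => key u v huv (Or.inl ⟨rfl, rfl⟩) h
  have hv : η v ≠ 0 := fun h => key v u huv.symm (Or.inr ⟨rfl, rfl⟩) h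
  have huvs : ({u, v} : Finset ι) ⊆ s := by
    intro i hi
    simp only [mem_insert, mem_singleton] at hi
    rcases hi with rfl | rfl
    · exact (hmems _).mpr hu
    · exact (hmems _).mpr hv
  have hsd : (s \ {u, v}).card = 1 := by
    rw [card_sdiff_of_subset huvs, hscard, husv u v huv |>.antisymm ?_]
    · rw [card_insert_of_notMem (by simpa using huv), card_singleton]
  obtain ⟨w, hw⟩ := Finset.card_eq_one.mp hsd
  have hwmem : w ∈ s \ {u, v} := hw ▸ mem_singleton_self w
  rw [mem_sdiff] at hwmem
  simp only [mem_insert, mem_singleton] at hwmem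
  push_neg at hwmem
  have hwu : w ≠ u := hwmem.2.1
  have hwv : w ≠ v := hwmem.2.2
  have hηw : η w ≠ 0 := (hmems _).mp hwmem.1
  have hseq : s = {u, v, w} := by
    apply Finset.Subset.antisymm
    · intro i hi
      rcases eq_or_ne i u with rfl | h1
      · simp
      rcases eq_or_ne i v with rfl | h2
      · simp
      · have : i ∈ s \ {u, v} := mem_sdiff.mpr ⟨hi, by simp [h1, h2]⟩
        rw [hw, mem_singleton] at this
        simp [this]
    · intro i hi
      simp only [mem_insert, mem_singleton] at hi
      rcases hi with rfl | rfl | rfl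
      · exact (hmems _).mpr hu
      · exact (hmems _).mpr hv
      · exact (hmems _).mpr hηw
  have hwT : w ∈ T := by
    rw [hmemT w, dip_apply_ne _ hwu hwv]; exact hηw
  have hTsub : T ⊆ {u, v, w} := by
    intro i hi
    by_contra hcon
    simp only [mem_insert, mem_singleton] at hcon
    push_neg at hcon
    have hi0 : η i = 0 := supp_off hseq (by simp [hcon.1, hcon.2.1, hcon.2.2])
    rw [hmemT i, dip_apply_ne _ hcon.1 hcon.2.1, hi0] at hi
    exact hi rfl
  have hTe : (T.erase w).card = 1 := by rw [card_erase_of_mem hwT, hTcard]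
  obtain ⟨t, ht⟩ := Finset.card_eq_one.mp hTe
  have htmem : t ∈ T.erase w := ht ▸ mem_singleton_self t
  have htT : t ∈ T := mem_of_mem_erase htmem
  have htw : t ≠ w := (mem_erase.mp htmem).1
  have htuv : t = u ∨ t = v := by
    have := hTsub htT
    simp only [mem_insert, mem_singleton] at this
    rcases this with rfl | rfl | rfl
    · exact Or.inl rfl
    · exact Or.inr rfl
    · exact absurd rfl htw
  have hmemTu : u ∈ T ↔ η u ≠ a := by rw [hmemT u, dip_self]
  have hmemTv : v ∈ T ↔ η v ≠ -a := by rw [hmemT v, dip_other _ huv]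
  have hiff : ∀ i, i ≠ w → (i ∈ T ↔ i = t) := by
    intro i hiw
    constructor
    · intro hiT
      have : i ∈ T.erase w := mem_erase.mpr ⟨hiw, hiT⟩
      rw [ht, mem_singleton] at this; exact this
    · rintro rfl; exact htT
  refine ⟨w, hwu, hwv, hηw, hseq, ?_⟩
  rcases htuv with rfl | rfl
  · -- t = u : u ∈ T, v ∉ T
    right
    constructor
    · exact hmemTu.mp htT
    · have : v ∉ T := fun h => huv ((hiff v hwv.symm).mp h).symm
      rw [hmemTv] at this
      exact not_not.mp this
  · -- t = v
    left
    constructor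
    · have : u ∉ T := fun h => huv ((hiff u hwu.symm).mp h)
      rw [hmemTu] at this
      exact not_not.mp this
    · exact hmemTv.mp htT

theorem wtt_eq_zero {η : ι → F} (h : wtt η = 0) : η = 0 := by
  funext i
  have := Finset.card_eq_zero.mp h
  by_contra hcon
  have : i ∈ univ.filter fun i => η i ≠ 0 := mem_filter.mpr ⟨mem_univ i, hcon⟩
  rw [Finset.card_eq_zero.mp h] at this
  exact absurd this (notMem_empty i)

end A

section B
variable {F : Type*} [Field F] [DecidableEq F] {ι : Type*} [Fintype ι] [DecidableEq ι]
  [AddCommGroup ι] [Module F ι] [NoZeroSMulDivisors F ι]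

theorem moment_dip {u v : ι} (c : F) (h : u ≠ v) :
    ∑ i, dip c u v i • i = c • (u - v) := by
  rw [sum_eq_pair (fun i => dip c u v i • i) h
    (fun i h1 h2 => by show dip c u v i • i = 0; rw [dip_apply_ne c h1 h2, zero_smul])]
  rw [dip_self, dip_other c h, smul_sub, neg_smul, sub_eq_add_neg]

theorem min_wtt {η : ι → F} (hη : η ≠ 0) (hs : ∑ i, η i = 0)
    (hm : ∑ i, η i • i = 0) : 3 ≤ wtt η := by
  by_contra hcon
  push_neg at hcon
  interval_cases h : wtt η
  · exact hη (wtt_eq_zero h)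
  · exact wtt_one_sum_ne h hs
  · obtain ⟨c, u, v, hc, huv, rfl⟩ := wt2_struct h hs
    rw [moment_dip c huv] at hm
    rcases smul_eq_zero.mp hm with h0 | h0
    · exact hc h0
    · exact huv (sub_eq_zero.mp h0)

theorem wt3_struct {η : ι → F} {a : F} {u v : ι} (ha : a ≠ 0) (huv : u ≠ v)
    (hs : ∑ i, η i = 0) (hm : ∑ i, η i • i = 0)
    (h3 : wtt η = 3) (h2 : wtt (η - dip a u v) = 2) :
    ∃ (m z : F) (w : ι), z ≠ 0 ∧ m ≠ 0 ∧ m ≠ 1 ∧ w ≠ u ∧ w ≠ v ∧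
      w = v + m • (u - v) ∧
      η u = -(m*z) ∧ η v = (m-1)*z ∧ η w = z ∧
      (∀ i, i ≠ u → i ≠ v → i ≠ w → η i = 0) ∧
      ((m*z = -a ∧ (m-1)*z ≠ -a) ∨ (m*z ≠ -a ∧ (m-1)*z = -a)) := by
  obtain ⟨w, hwu, hwv, hηw, hseq, hxor⟩ := supp2 ha huv h3 h2
  set x := η u with hx
  set y := η v with hy
  set z := η w with hz
  have hxne : x ≠ 0 := by
    have : u ∈ univ.filter fun i => η i ≠ 0 := by rw [hseq]; simp
    exact (mem_filter.mp this).2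
  have hyne : y ≠ 0 := by
    have : v ∈ univ.filter fun i => η i ≠ 0 := by rw [hseq]; simp
    exact (mem_filter.mp this).2
  have hoff : ∀ i, i ≠ u → i ≠ v → i ≠ w → η i = 0 := fun i h1 h2 h3 =>
    supp_off hseq (by simp [h1, h2, h3])
  have hsum3 : x + y + z = 0 := by
    rw [hx, hy, hz, ← sum_eq_triple η huv hwu.symm hwv.symm hoff, hs]
  have hmom3 : x • u + y • v + z • w = 0 := by
    have := sum_eq_triple (fun i => η i • i) huv hwu.symm hwv.symm
      (fun i h1 h2 h3 => by show η i • i = 0; rw [hoff i h1 h2 h3, zero_smul])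
    rw [← this, hm]
  set m : F := -x * z⁻¹ with hmdef
  have hmz : m * z = -x := by
    rw [hmdef, mul_assoc, inv_mul_cancel₀ hηw, mul_one]
  have hxe : x = -(m*z) := by linear_combination hmz
  have hmne : m ≠ 0 := by
    intro h0
    rw [h0, zero_mul] at hmz
    exact hxne (by linear_combination hmz)
  have hyz : y = (m - 1) * z := by
    have h' : (m-1)*z = m*z - z := by ring
    rw [h', hmz]
    linear_combination hsum3
  have hm1 : m ≠ 1 := by
    intro h1
    rw [h1] at hyz
    simp at hyz
    exact hyne hyz
  have hweq : w = v + m • (u - v) := by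
    have h0 : z • w = -(x • u) - y • v := by
      calc z • w = (x • u + y • v + z • w) - x • u - y • v := by abel
        _ = -(x • u) - y • v := by rw [hmom3]; abel
    have hzw : z • w = z • (v + m • (u - v)) := by
      rw [h0, hxe, hyz]
      module
    exact smul_right_injective ι hηw hzw
  refine ⟨m, z, w, hηw, hmne, hm1, hwu, hwv, hweq, hxe, hyz, rfl, hoff, ?_⟩
  rcases hxor with ⟨h1, h2⟩ | ⟨h1, h2⟩
  · left
    refine ⟨by linear_combination hxe - h1, fun hcon => h2 (by rw [hyz]; exact hcon)⟩
  · right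
    refine ⟨fun hcon => h1 (by linear_combination hxe - hcon), by rw [← hyz]; exact h2⟩


theorem sub_rep {η : ι → F} {e : F} {s t : ι} (he : e ≠ 0) (hst : s ≠ t)
    (hs : ∑ i, η i = 0) (h2 : wtt (η - dip e s t) = 2) :
    ∃ c w₁ w₂, c ≠ 0 ∧ w₁ ≠ w₂ ∧ η = dip e s t + dip c w₁ w₂ := by
  have hsum : ∑ i, (η - dip e s t) i = 0 := by
    simp only [Pi.sub_apply]
    rw [Finset.sum_sub_distrib, hs, sum_dip e hst, sub_zero]
  obtain ⟨c, w₁, w₂, hc, hw, heq⟩ := wt2_struct h2 hsum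
  exact ⟨c, w₁, w₂, hc, hw, by rw [← heq]; funext i; simp⟩

theorem wt4_struct {η : ι → F} {a b : F} {u v p r : ι} (ha : a ≠ 0) (hb : b ≠ 0)
    (huv : u ≠ v) (hpr : p ≠ r)
    (hdist : 3 ≤ wtt (dip a u v - dip b p r))
    (hs : ∑ i, η i = 0)
    (h4 : wtt η = 4) (h2 : wtt (η - dip a u v) = 2) (h2' : wtt (η - dip b p r) = 2) :
    η = dip a u v + dip b p r ∧ p ≠ u ∧ p ≠ v ∧ r ≠ u ∧ r ≠ v := by
  obtain ⟨c, w₁, w₂, hc, hw, heq⟩ := sub_rep ha huv hs h2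
  obtain ⟨c', w₁', w₂', hc', hw', heq'⟩ := sub_rep hb hpr hs h2'
  -- distinctness of w's from {u,v}
  have hdist4 : ∀ i : ι, i ≠ u → i ≠ v → i ≠ w₁ → i ≠ w₂ → η i = 0 := by
    intro i h1 h2 h3 h4
    rw [heq]
    simp only [Pi.add_apply]
    rw [dip_apply_ne _ h1 h2, dip_apply_ne _ h3 h4, add_zero]
  have hw1u : w₁ ≠ u := by
    intro hcoll
    have : wtt η ≤ 3 := wtt_le_triple (i₁ := u) (i₂ := v) (i₃ := w₂)
      (fun i h1 h2 h3 => hdist4 i h1 h2 (by rw [hcoll]; exact h1) h3)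
    omega
  have hw1v : w₁ ≠ v := by
    intro hcoll
    have : wtt η ≤ 3 := wtt_le_triple (i₁ := u) (i₂ := v) (i₃ := w₂)
      (fun i h1 h2 h3 => hdist4 i h1 h2 (by rw [hcoll]; exact h2) h3)
    omega
  have hw2u : w₂ ≠ u := by
    intro hcoll
    have : wtt η ≤ 3 := wtt_le_triple (i₁ := u) (i₂ := v) (i₃ := w₁)
      (fun i h1 h2 h3 => hdist4 i h1 h2 h3 (by rw [hcoll]; exact h1))
    omega
  have hw2v : w₂ ≠ v := by
    intro hcoll
    have : wtt η ≤ 3 := wtt_le_triple (i₁ := u) (i₂ := v) (i₃ := w₁)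
      (fun i h1 h2 h3 => hdist4 i h1 h2 h3 (by rw [hcoll]; exact h2))
    omega
  have hηu : η u = a := by
    rw [heq]; simp only [Pi.add_apply]
    rw [dip_self, dip_apply_ne _ (Ne.symm hw1u) (Ne.symm hw2u), add_zero]
  have hηv : η v = -a := by
    rw [heq]; simp only [Pi.add_apply]
    rw [dip_other _ huv, dip_apply_ne _ (Ne.symm hw1v) (Ne.symm hw2v), add_zero]
  have hηw1 : η w₁ = c := by
    rw [heq]; simp only [Pi.add_apply]
    rw [dip_apply_ne _ hw1u hw1v, dip_self, zero_add]
  have hηw2 : η w₂ = -c := by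
    rw [heq]; simp only [Pi.add_apply]
    rw [dip_apply_ne _ hw2u hw2v, dip_other _ hw, zero_add]
  -- symmetric for primes
  have hdist4' : ∀ i : ι, i ≠ p → i ≠ r → i ≠ w₁' → i ≠ w₂' → η i = 0 := by
    intro i h1 h2 h3 h4
    rw [heq']
    simp only [Pi.add_apply]
    rw [dip_apply_ne _ h1 h2, dip_apply_ne _ h3 h4, add_zero]
  have hw1p : w₁' ≠ p := by
    intro hcoll
    have : wtt η ≤ 3 := wtt_le_triple (i₁ := p) (i₂ := r) (i₃ := w₂')
      (fun i h1 h2 h3 => hdist4' i h1 h2 (by rw [hcoll]; exact h1) h3)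
    omega
  have hw1r : w₁' ≠ r := by
    intro hcoll
    have : wtt η ≤ 3 := wtt_le_triple (i₁ := p) (i₂ := r) (i₃ := w₂')
      (fun i h1 h2 h3 => hdist4' i h1 h2 (by rw [hcoll]; exact h2) h3)
    omega
  have hw2p : w₂' ≠ p := by
    intro hcoll
    have : wtt η ≤ 3 := wtt_le_triple (i₁ := p) (i₂ := r) (i₃ := w₁')
      (fun i h1 h2 h3 => hdist4' i h1 h2 h3 (by rw [hcoll]; exact h1))
    omega
  have hw2r : w₂' ≠ r := by
    intro hcoll
    have : wtt η ≤ 3 := wtt_le_triple (i₁ := p) (i₂ := r) (i₃ := w₁')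
      (fun i h1 h2 h3 => hdist4' i h1 h2 h3 (by rw [hcoll]; exact h2))
    omega
  have hηp : η p = b := by
    rw [heq']; simp only [Pi.add_apply]
    rw [dip_self, dip_apply_ne _ (Ne.symm hw1p) (Ne.symm hw2p), add_zero]
  have hηr : η r = -b := by
    rw [heq']; simp only [Pi.add_apply]
    rw [dip_other _ hpr, dip_apply_ne _ (Ne.symm hw1r) (Ne.symm hw2r), add_zero]
  -- p, r avoid u, v
  have hpu : p ≠ u := by
    rintro rfl
    have hba : b = a := by rw [← hηp, hηu]
    have : wtt (dip a p v - dip b p r) ≤ 2 := by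
      apply wtt_le_pair (s := v) (t := r)
      intro i h1 h2
      simp only [Pi.sub_apply]
      rcases eq_or_ne i p with rfl | h3
      · rw [dip_self, dip_self, hba, sub_self]
      · rw [dip_apply_ne _ h3 h1, dip_apply_ne _ h3 h2, sub_self]
    omega
  have hpv : p ≠ v := by
    rintro rfl
    have hba : b = -a := by rw [← hηp, hηv]
    have : wtt (dip a u p - dip b p r) ≤ 2 := by
      apply wtt_le_pair (s := u) (t := r)
      intro i h1 h2
      simp only [Pi.sub_apply]
      rcases eq_or_ne i p with rfl | h3
      · rw [dip_other _ huv, dip_self, hba, sub_self]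
      · rw [dip_apply_ne _ h1 h3, dip_apply_ne _ h3 h2, sub_self]
    omega
  have hru : r ≠ u := by
    rintro rfl
    have hba : -b = a := by rw [← hηr, hηu]
    have : wtt (dip a r v - dip b p r) ≤ 2 := by
      apply wtt_le_pair (s := v) (t := p)
      intro i h1 h2
      simp only [Pi.sub_apply]
      rcases eq_or_ne i r with rfl | h3
      · rw [dip_self, dip_other _ hpr, hba, sub_self]
      · rw [dip_apply_ne _ h3 h1, dip_apply_ne _ h2 h3, sub_self]
    omega
  have hrv : r ≠ v := by
    rintro rfl
    have hba : b = a := by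
      have : -b = -a := by rw [← hηr, hηv]
      linear_combination -this
    have : wtt (dip a u r - dip b p r) ≤ 2 := by
      apply wtt_le_pair (s := u) (t := p)
      intro i h1 h2
      simp only [Pi.sub_apply]
      rcases eq_or_ne i r with rfl | h3
      · rw [dip_other _ huv, dip_other _ hpr, hba, sub_self]
      · rw [dip_apply_ne _ h1 h3, dip_apply_ne _ h2 h3, sub_self]
    omega
  -- p ∈ {w₁, w₂}
  have hpw : p = w₁ ∨ p = w₂ := by
    by_contra hcon
    push_neg at hcon
    exact hb (by rw [← hηp]; exact hdist4 p hpu hpv hcon.1 hcon.2)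
  have hrw : r = w₁ ∨ r = w₂ := by
    by_contra hcon
    push_neg at hcon
    have : η r = 0 := hdist4 r hru hrv hcon.1 hcon.2
    rw [hηr] at this
    exact hb (by linear_combination -this)
  refine ⟨?_, hpu, hpv, hru, hrv⟩
  rcases hpw with rfl | rfl
  · rcases hrw with rfl | rfl
    · exact absurd rfl hpr
    · have hcb : c = b := by rw [← hηw1, hηp]
      rw [heq, hcb]
  · rcases hrw with rfl | rfl
    · have hcb : -c = b := by rw [← hηw2, hηp]
      rw [heq]
      congr 1
      rw [← hcb, dip_neg_swap c hw]
    · exact absurd rfl hpr.symm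


theorem wtt_add_le (f g : ι → F) : wtt (f + g) ≤ wtt f + wtt g := by
  have hsub : (univ.filter fun i => (f + g) i ≠ 0) ⊆
      (univ.filter fun i => f i ≠ 0) ∪ (univ.filter fun i => g i ≠ 0) := by
    intro i hi
    simp only [mem_filter, mem_univ, true_and, Pi.add_apply] at hi
    simp only [mem_union, mem_filter, mem_univ, true_and]
    by_contra hcon
    push_neg at hcon
    rw [hcon.1, hcon.2, add_zero] at hi
    exact hi rfl
  calc wtt (f + g) ≤ _ := card_le_card hsub
    _ ≤ _ := card_union_le _ _

theorem pair_split {m a z₁ z₂ : F} (hm0 : m ≠ 0) (hm1 : m ≠ 1) (hz : z₁ ≠ z₂)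
    (c₁ : m * z₁ = -a ∨ (m - 1) * z₁ = -a) (c₂ : m * z₂ = -a ∨ (m - 1) * z₂ = -a) :
    (m * z₁ = -a ∧ (m - 1) * z₂ = -a) ∨ (m * z₂ = -a ∧ (m - 1) * z₁ = -a) := by
  have hm1' : m - 1 ≠ 0 := sub_ne_zero.mpr hm1
  rcases c₁ with c₁ | c₁ <;> rcases c₂ with c₂ | c₂
  · exact absurd (mul_left_cancel₀ hm0 (c₁.trans c₂.symm)) hz
  · exact Or.inl ⟨c₁, c₂⟩
  · exact Or.inr ⟨c₂, c₁⟩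
  · exact absurd (mul_left_cancel₀ hm1' (c₁.trans c₂.symm)) hz

theorem endU {m a bt zA zB : F} (hzB : zB ≠ 0) (hzne : zA ≠ zB)
    (hDA : m * zA = -a) (hDB : (m - 1) * zB = -a) (hbt : bt ≠ -a)
    (CA : zA = bt ∨ m * zA = bt) (CB : zB = bt ∨ m * zB = bt) :
    m ^ 2 = m - 1 ∧ m * bt = -a := by
  have hA : zA = bt := by
    rcases CA with h | h
    · exact h
    · exact absurd (hDA.symm.trans h) (fun hh => hbt hh.symm)
  have hB : m * zB = bt := by
    rcases CB with h | h
    · exact absurd (h.trans hA.symm).symm hzne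
    · exact h
  have key : m ^ 2 * zB = (m - 1) * zB := by
    have : m * (m * zB) = m * zA := by rw [hB, hA]
    calc m ^ 2 * zB = m * (m * zB) := by ring
      _ = m * zA := this
      _ = -a := hDA
      _ = (m - 1) * zB := hDB.symm
  refine ⟨mul_right_cancel₀ hzB key, ?_⟩
  rw [← hA, hDA]

theorem endV {m a bt zA zB : F} (hzA : zA ≠ 0) (hzne : zA ≠ zB)
    (hDA : m * zA = -a) (hDB : (m - 1) * zB = -a) (hbt : bt ≠ a)
    (CA : zA = bt ∨ (m - 1) * zA = -bt) (CB : zB = bt ∨ (m - 1) * zB = -bt) :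
    m ^ 2 = m - 1 ∧ (m - 1) * bt = -a := by
  have hB : zB = bt := by
    rcases CB with h | h
    · exact h
    · exfalso
      apply hbt
      have : -bt = -a := by rw [← h, hDB]
      linear_combination -this
  have hA : (m - 1) * zA = -zB := by
    rcases CA with h | h
    · exact absurd (h.trans hB.symm) hzne
    · rw [h, hB]
  have key : m ^ 2 * zA = (m - 1) * zA := by
    have h1 : (m - 1) * zB = -a := hDB
    have h2 : zB = -((m - 1) * zA) := by linear_combination hA
    rw [h2] at h1
    -- -(m-1)^2 zA = -a = m zA
    have h3 : (m - 1) * -((m - 1) * zA) = m * zA := by rw [h1, ← hDA]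
    linear_combination -h3
  refine ⟨mul_right_cancel₀ hzA key, ?_⟩
  rw [← hB, hDB]

theorem core_aux {a b : F} {u v p r : ι} (ha : a ≠ 0) (hb : b ≠ 0) (huv : u ≠ v) (hpr : p ≠ r)
    (hdist : 3 ≤ wtt (dip a u v - dip b p r))
    {δ₁ δ₂ : ι → F} (hne12 : δ₁ ≠ δ₂)
    (h2ne : δ₂ ≠ 0)
    (h1s : ∑ i, δ₁ i = 0) (h1m : ∑ i, δ₁ i • i = 0)
    (h2s : ∑ i, δ₂ i = 0) (h2m : ∑ i, δ₂ i • i = 0)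
    (h1D : wtt (δ₁ - dip a u v) = 2) (h1D' : wtt (δ₁ - dip b p r) = 2)
    (h2D : wtt (δ₂ - dip a u v) = 2) (h2D' : wtt (δ₂ - dip b p r) = 2)
    (hw31 : wtt δ₁ = 3) :
    ∃ m c : F, m ^ 2 = m - 1 ∧ c ≠ 0 ∧
      ((dip b p r = dip c (v + m • (u - v)) u ∧ m * c = -a) ∨
       (dip b p r = dip c (v + m • (u - v)) v ∧ (m - 1) * c = -a)) := by
  obtain ⟨m, z₁, w, hz1, hm0, hm1, hwu, hwv, hweq, h1u, h1v, h1w, h1off, hXD1⟩ :=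
    wt3_struct ha huv h1s h1m hw31 h1D
  obtain ⟨w', hw'p, hw'r, hδw', hsupp1, hXD1'⟩ := supp2 hb hpr hw31 h1D'
  -- p, r ∈ {u, v, w}
  have hmem : ∀ i : ι, δ₁ i ≠ 0 → (i = u ∨ i = v ∨ i = w) := by
    intro i hi
    by_contra hcon
    push_neg at hcon
    exact hi (h1off i hcon.1 hcon.2.1 hcon.2.2)
  have hp3 : p = u ∨ p = v ∨ p = w := by
    apply hmem
    have : p ∈ univ.filter fun i => δ₁ i ≠ 0 := by rw [hsupp1]; simp
    exact (mem_filter.mp this).2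
  have hr3 : r = u ∨ r = v ∨ r = w := by
    apply hmem
    have : r ∈ univ.filter fun i => δ₁ i ≠ 0 := by rw [hsupp1]; simp
    exact (mem_filter.mp this).2
  -- not both in {u, v}
  have hnotboth : ¬ ((p = u ∨ p = v) ∧ (r = u ∨ r = v)) := by
    rintro ⟨hp, hr⟩
    have : wtt (dip a u v - dip b p r) ≤ 2 := by
      apply wtt_le_pair (s := u) (t := v)
      intro i h1 h2
      simp only [Pi.sub_apply]
      have e1 : dip a u v i = 0 := dip_apply_ne _ h1 h2
      have e2 : dip b p r i = 0 := by
        apply dip_apply_ne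
        · rcases hp with rfl | rfl
          · exact h1
          · exact h2
        · rcases hr with rfl | rfl
          · exact h1
          · exact h2
      rw [e1, e2, sub_self]
    omega
  -- δ₂ has weight 3
  have hw32 : wtt δ₂ = 3 := by
    have hge : 3 ≤ wtt δ₂ := min_wtt h2ne h2s h2m
    have hle : wtt δ₂ ≤ 4 := by
      have : δ₂ = (δ₂ - dip a u v) + dip a u v := by ring
      calc wtt δ₂ = wtt ((δ₂ - dip a u v) + dip a u v) := by rw [← this]
        _ ≤ wtt (δ₂ - dip a u v) + wtt (dip a u v) := wtt_add_le _ _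
        _ = 2 + 2 := by rw [h2D, wtt_dip ha huv]
    rcases Nat.eq_or_lt_of_le hge with h3 | h4
    · exact h3.symm
    · exfalso
      have h4' : wtt δ₂ = 4 := by omega
      obtain ⟨_, hpu, hpv, hru, hrv⟩ := wt4_struct ha hb huv hpr hdist h2s h4' h2D h2D'
      rcases hp3 with hh | hh | hh
      · exact hpu hh
      · exact hpv hh
      · rcases hr3 with hh' | hh' | hh'
        · exact hru hh'
        · exact hrv hh'
        · rw [hh] at hpr; rw [hh'] at hpr; exact hpr rfl
  obtain ⟨m₂, z₂, w₂, hz2, hm02, hm12, hw2u, hw2v, hweq2, h2u, h2v, h2w, h2off, hXD2⟩ :=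
    wt3_struct ha huv h2s h2m hw32 h2D
  obtain ⟨w₂', hw2'p, hw2'r, hδ2w', hsupp2', hXD2'⟩ := supp2 hb hpr hw32 h2D'
  have hmem2 : ∀ i : ι, δ₂ i ≠ 0 → (i = u ∨ i = v ∨ i = w₂) := by
    intro i hi
    by_contra hcon
    push_neg at hcon
    exact hi (h2off i hcon.1 hcon.2.1 hcon.2.2)
  -- the element of {p,r} not in {u,v} equals w and w₂
  have hww2 : w = w₂ := by
    have hwp : w = p ∨ w = r → (w = w₂) := by
      intro hcase
      have hδ2w : δ₂ w ≠ 0 := by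
        have : w ∈ univ.filter fun i => δ₂ i ≠ 0 := by
          rw [hsupp2']
          rcases hcase with rfl | rfl <;> simp
        exact (mem_filter.mp this).2
      rcases hmem2 w hδ2w with hh | hh | hh
      · exact absurd hh hwu
      · exact absurd hh hwv
      · exact hh
    -- w ∈ {p, r}: since p,r ∈ {u,v,w} and not both in {u,v}
    rcases hp3 with hh | hh | hh
    · rcases hr3 with hh' | hh' | hh'
      · exact absurd ⟨Or.inl hh, Or.inl hh'⟩ hnotboth
      · exact absurd ⟨Or.inl hh, Or.inr hh'⟩ hnotboth
      · exact hwp (Or.inr hh'.symm)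
    · rcases hr3 with hh' | hh' | hh'
      · exact absurd ⟨Or.inr hh, Or.inl hh'⟩ hnotboth
      · exact absurd ⟨Or.inr hh, Or.inr hh'⟩ hnotboth
      · exact hwp (Or.inr hh'.symm)
    · exact hwp (Or.inl hh.symm)
  have hmm2 : m = m₂ := by
    have h' : v + m • (u - v) = v + m₂ • (u - v) := by
      rw [← hweq, hww2, hweq2]
    have h'' : (m - m₂) • (u - v) = 0 := by
      rw [sub_smul, add_left_cancel h', sub_self]
    rcases smul_eq_zero.mp h'' with h0 | h0
    · exact sub_eq_zero.mp h0
    · exact absurd (sub_eq_zero.mp h0) huv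
  subst hmm2
  subst hww2
  have hzne : z₁ ≠ z₂ := by
    intro hzz
    apply hne12
    funext i
    rcases eq_or_ne i u with rfl | hiu
    · rw [h1u, h2u, hzz]
    rcases eq_or_ne i v with rfl | hiv
    · rw [h1v, h2v, hzz]
    rcases eq_or_ne i w with rfl | hiw
    · rw [h1w, h2w, hzz]
    · rw [h1off i hiu hiv hiw, h2off i hiu hiv hiw]
  have c₁ : m * z₁ = -a ∨ (m - 1) * z₁ = -a :=
    hXD1.elim (fun h => Or.inl h.1) (fun h => Or.inr h.2)
  have c₂ : m * z₂ = -a ∨ (m - 1) * z₂ = -a :=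
    hXD2.elim (fun h => Or.inl h.1) (fun h => Or.inr h.2)
  have hsplit := pair_split hm0 hm1 hzne c₁ c₂
  rcases hp3 with hP | hP | hP
  · -- p = u
    replace hP := hP.symm; subst hP
    rcases hr3 with hR | hR | hR
    · exact absurd hR hpr.symm
    · exact absurd ⟨Or.inl rfl, Or.inr hR⟩ hnotboth
    · replace hR := hR.symm; subst hR
      -- config B1 : p = u, r = w, bt := -b
      have hbne : b ≠ a := by
        rintro rfl
        have hle : wtt (dip b u v - dip b u w) ≤ 2 := by
          apply wtt_le_pair (s := v) (t := w)
          intro i h1 h2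
          simp only [Pi.sub_apply]
          rcases eq_or_ne i u with rfl | h3
          · rw [dip_self, dip_self, sub_self]
          · rw [dip_apply_ne _ h3 h1, dip_apply_ne _ h3 h2, sub_self]
        omega
      have hbt : -b ≠ -a := fun h => hbne (neg_inj.mp h)
      have C1 : z₁ = -b ∨ m * z₁ = -b := by
        rcases hXD1' with ⟨h, _⟩ | ⟨_, h⟩
        · rw [h1u] at h; right; linear_combination -h
        · rw [h1w] at h; left; exact h
      have C2 : z₂ = -b ∨ m * z₂ = -b := by
        rcases hXD2' with ⟨h, _⟩ | ⟨_, h⟩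
        · rw [h2u] at h; right; linear_combination -h
        · rw [h2w] at h; left; exact h
      have hend : m ^ 2 = m - 1 ∧ m * (-b) = -a := by
        rcases hsplit with ⟨hA, hB⟩ | ⟨hA, hB⟩
        · exact endU hz2 hzne hA hB hbt C1 C2
        · exact endU hz1 hzne.symm hA hB hbt C2 C1
      refine ⟨m, -b, hend.1, neg_ne_zero.mpr hb, Or.inl ⟨?_, hend.2⟩⟩
      rw [← hweq]
      exact (dip_neg_swap b hwu.symm).symm
  · -- p = v
    replace hP := hP.symm; subst hP
    rcases hr3 with hR | hR | hR
    · exact absurd ⟨Or.inr rfl, Or.inl hR⟩ hnotboth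
    · exact absurd hR hpr.symm
    · replace hR := hR.symm; subst hR
      -- config B2 : p = v, r = w, bt := -b
      have hbne : b ≠ -a := by
        intro hba
        have hle : wtt (dip a u v - dip b v w) ≤ 2 := by
          apply wtt_le_pair (s := u) (t := w)
          intro i h1 h2
          simp only [Pi.sub_apply]
          rcases eq_or_ne i v with rfl | h3
          · rw [dip_other _ huv, dip_self, hba, sub_self]
          · rw [dip_apply_ne _ h1 h3, dip_apply_ne _ h3 h2, sub_self]
        omega
      have hbt : -b ≠ a := by
        intro h; exact hbne (by linear_combination -h)
      have C1 : z₁ = -b ∨ (m - 1) * z₁ = -(-b) := by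
        rcases hXD1' with ⟨h, _⟩ | ⟨_, h⟩
        · rw [h1v] at h; right; linear_combination h
        · rw [h1w] at h; left; exact h
      have C2 : z₂ = -b ∨ (m - 1) * z₂ = -(-b) := by
        rcases hXD2' with ⟨h, _⟩ | ⟨_, h⟩
        · rw [h2v] at h; right; linear_combination h
        · rw [h2w] at h; left; exact h
      have hend : m ^ 2 = m - 1 ∧ (m - 1) * (-b) = -a := by
        rcases hsplit with ⟨hA, hB⟩ | ⟨hA, hB⟩
        · exact endV hz1 hzne hA hB hbt C1 C2
        · exact endV hz2 hzne.symm hA hB hbt C2 C1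
      refine ⟨m, -b, hend.1, neg_ne_zero.mpr hb, Or.inr ⟨?_, hend.2⟩⟩
      rw [← hweq]
      exact (dip_neg_swap b hwv.symm).symm
  · -- p = w
    replace hP := hP.symm; subst hP
    rcases hr3 with hR | hR | hR
    · replace hR := hR.symm; subst hR
      -- config A1 : p = w, r = u, bt := b
      have hbt : b ≠ -a := by
        intro hba
        have hle : wtt (dip a u v - dip b w u) ≤ 2 := by
          apply wtt_le_pair (s := v) (t := w)
          intro i h1 h2
          simp only [Pi.sub_apply]
          rcases eq_or_ne i u with rfl | h3
          · rw [dip_self, dip_other _ hwu, hba, neg_neg, sub_self]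
          · rw [dip_apply_ne _ h3 h1, dip_apply_ne _ h2 h3, sub_self]
        omega
      have C1 : z₁ = b ∨ m * z₁ = b := by
        rcases hXD1' with ⟨h, _⟩ | ⟨_, h⟩
        · rw [h1w] at h; left; exact h
        · rw [h1u] at h; right; linear_combination -h
      have C2 : z₂ = b ∨ m * z₂ = b := by
        rcases hXD2' with ⟨h, _⟩ | ⟨_, h⟩
        · rw [h2w] at h; left; exact h
        · rw [h2u] at h; right; linear_combination -h
      have hend : m ^ 2 = m - 1 ∧ m * b = -a := by
        rcases hsplit with ⟨hA, hB⟩ | ⟨hA, hB⟩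
        · exact endU hz2 hzne hA hB hbt C1 C2
        · exact endU hz1 hzne.symm hA hB hbt C2 C1
      refine ⟨m, b, hend.1, hb, Or.inl ⟨?_, hend.2⟩⟩
      rw [← hweq]
    · replace hR := hR.symm; subst hR
      -- config A2 : p = w, r = v, bt := b
      have hbt : b ≠ a := by
        rintro rfl
        have hle : wtt (dip b u v - dip b w v) ≤ 2 := by
          apply wtt_le_pair (s := u) (t := w)
          intro i h1 h2
          simp only [Pi.sub_apply]
          rcases eq_or_ne i v with rfl | h3
          · rw [dip_other _ huv, dip_other _ hwv, sub_self]
          · rw [dip_apply_ne _ h1 h3, dip_apply_ne _ h2 h3, sub_self]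
        omega
      have C1 : z₁ = b ∨ (m - 1) * z₁ = -b := by
        rcases hXD1' with ⟨h, _⟩ | ⟨_, h⟩
        · rw [h1w] at h; left; exact h
        · rw [h1v] at h; right; exact h
      have C2 : z₂ = b ∨ (m - 1) * z₂ = -b := by
        rcases hXD2' with ⟨h, _⟩ | ⟨_, h⟩
        · rw [h2w] at h; left; exact h
        · rw [h2v] at h; right; exact h
      have hend : m ^ 2 = m - 1 ∧ (m - 1) * b = -a := by
        rcases hsplit with ⟨hA, hB⟩ | ⟨hA, hB⟩
        · exact endV hz1 hzne hA hB hbt C1 C2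
        · exact endV hz2 hzne.symm hA hB hbt C2 C1
      refine ⟨m, b, hend.1, hb, Or.inr ⟨?_, hend.2⟩⟩
      rw [← hweq]
    · exact absurd hR hpr.symm

theorem core {a b : F} {u v p r : ι} (ha : a ≠ 0) (hb : b ≠ 0) (huv : u ≠ v) (hpr : p ≠ r)
    (hdist : 3 ≤ wtt (dip a u v - dip b p r))
    {δ₁ δ₂ : ι → F} (hne12 : δ₁ ≠ δ₂)
    (h1ne : δ₁ ≠ 0) (h2ne : δ₂ ≠ 0)
    (h1s : ∑ i, δ₁ i = 0) (h1m : ∑ i, δ₁ i • i = 0)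
    (h2s : ∑ i, δ₂ i = 0) (h2m : ∑ i, δ₂ i • i = 0)
    (h1D : wtt (δ₁ - dip a u v) = 2) (h1D' : wtt (δ₁ - dip b p r) = 2)
    (h2D : wtt (δ₂ - dip a u v) = 2) (h2D' : wtt (δ₂ - dip b p r) = 2) :
    ∃ m c : F, m ^ 2 = m - 1 ∧ c ≠ 0 ∧
      ((dip b p r = dip c (v + m • (u - v)) u ∧ m * c = -a) ∨
       (dip b p r = dip c (v + m • (u - v)) v ∧ (m - 1) * c = -a)) := by
  have hbound : ∀ δ : ι → F, δ ≠ 0 → (∑ i, δ i = 0) → (∑ i, δ i • i = 0) →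
      wtt (δ - dip a u v) = 2 → wtt δ = 3 ∨ wtt δ = 4 := by
    intro δ hne hs hm hD
    have hge : 3 ≤ wtt δ := min_wtt hne hs hm
    have : δ = (δ - dip a u v) + dip a u v := by ring
    have hle : wtt δ ≤ 4 := by
      calc wtt δ = wtt ((δ - dip a u v) + dip a u v) := by rw [← this]
        _ ≤ wtt (δ - dip a u v) + wtt (dip a u v) := wtt_add_le _ _
        _ = 2 + 2 := by rw [hD, wtt_dip ha huv]
    omega
  rcases hbound δ₁ h1ne h1s h1m h1D with h31 | h41
  · exact core_aux ha hb huv hpr hdist hne12 h2ne h1s h1m h2s h2m h1D h1D' h2D h2D' h31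
  rcases hbound δ₂ h2ne h2s h2m h2D with h32 | h42
  · exact core_aux ha hb huv hpr hdist hne12.symm h1ne h2s h2m h1s h1m h2D h2D' h1D h1D' h32
  · exfalso
    obtain ⟨he1, _, _, _, _⟩ := wt4_struct ha hb huv hpr hdist h1s h41 h1D h1D'
    obtain ⟨he2, _, _, _, _⟩ := wt4_struct ha hb huv hpr hdist h2s h42 h2D h2D'
    exact hne12 (he1.trans he2.symm)

end B

section Main
variable {F : Type} [Field F] [Fintype F] [DecidableEq F] {d : ℕ}

theorem RMs1_sum {α : (Fin d → F) → F} (h : α ∈ RMs1 F d) : ∑ v, α v = 0 := h.1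
theorem RMs1_mom {α : (Fin d → F) → F} (h : α ∈ RMs1 F d) : ∑ v, α v • v = 0 := h.2

theorem diff_sum {β γ : (Fin d → F) → F} (hβ : β ∈ RMs1 F d) (hγ : γ ∈ RMs1 F d) :
    ∑ i, (β - γ) i = 0 := by
  simp only [Pi.sub_apply]
  rw [Finset.sum_sub_distrib, RMs1_sum hβ, RMs1_sum hγ, sub_zero]

theorem diff_mom {β γ : (Fin d → F) → F} (hβ : β ∈ RMs1 F d) (hγ : γ ∈ RMs1 F d) :
    ∑ i, (β - γ) i • i = 0 := by
  simp only [Pi.sub_apply, sub_smul]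
  rw [Finset.sum_sub_distrib, RMs1_mom hβ, RMs1_mom hγ, sub_zero]

theorem RMs1_mindist {β γ : (Fin d → F) → F} (hβ : β ∈ RMs1 F d) (hγ : γ ∈ RMs1 F d)
    (hne : β ≠ γ) : 3 ≤ hammingDist β γ := by
  rw [hammingDist_eq_wtt]
  exact min_wtt (sub_ne_zero.mpr hne) (diff_sum hβ hγ) (diff_mom hβ hγ)

theorem nbr_mem {β ν : (Fin d → F) → F} (hβ : β ∈ RMs1 F d)
    (h1 : hammingDist β ν = 1) : ν ∈ neighbourSet (RMs1 F d) := by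
  constructor
  · intro hν
    have hne : β ≠ ν := by
      intro h; rw [h] at h1; simp [hammingDist_self] at h1
    have := RMs1_mindist hβ hν hne
    omega
  · exact ⟨β, hβ, by rwa [hammingDist_comm]⟩

theorem assoc_sum_zero {α : (Fin d → F) → F} {x : ((Fin d → F) → F) ≃ ((Fin d → F) → F)}
    (hET : IsElusiveTriple (RMs1 F d) α x) {π₀ : (Fin d → F) → F}
    (hπ : π₀ ∈ x '' RMs1 F d) : ∑ i, π₀ i = 0 := by
  obtain ⟨β, hβ, rfl⟩ := hπ
  by_contra hσ
  set σ := ∑ i, x β i with hσdef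
  set i₀ : Fin d → F := 0 with hi₀
  set μ := Function.update (x β) i₀ (x β i₀ - σ) with hμ
  have hdist1 : hammingDist (x β) μ = 1 := by
    unfold hammingDist
    have : (univ.filter fun j => x β j ≠ μ j) = {i₀} := by
      ext j
      simp only [mem_filter, mem_univ, true_and, mem_singleton]
      constructor
      · intro hj
        by_contra hji
        rw [hμ, Function.update_of_ne hji] at hj
        exact hj rfl
      · rintro rfl
        rw [hμ, Function.update_self]
        intro hcon
        apply hσ
        linear_combination hcon
    rw [this, card_singleton]
  have hμC1 : μ ∈ neighbourSet (RMs1 F d) := by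
    have hγ : hammingDist β (x.symm μ) = 1 := by
      rw [← hET.1 β (x.symm μ), Equiv.apply_symm_apply]
      exact hdist1
    have hmem : x.symm μ ∈ neighbourSet (RMs1 F d) := nbr_mem hβ hγ
    have : μ ∈ x '' neighbourSet (RMs1 F d) :=
      ⟨x.symm μ, hmem, Equiv.apply_symm_apply x μ⟩
    rwa [hET.2.1] at this
  have hμsum : ∑ i, μ i = 0 := by
    rw [hμ]
    rw [Finset.sum_update_of_mem (mem_univ i₀)]
    have h2 : ∑ j ∈ univ.erase i₀, x β j = σ - x β i₀ := by
      have := Finset.add_sum_erase univ (x β) (mem_univ i₀)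
      linear_combination this
    rw [Finset.sdiff_singleton_eq_erase, h2]
    ring
  obtain ⟨hμnotC, c, hcC, hdc⟩ := hμC1
  rw [hammingDist_eq_wtt'] at hdc
  have hcs : ∑ i, (c - μ) i = 0 := by
    simp only [Pi.sub_apply]
    rw [Finset.sum_sub_distrib, RMs1_sum hcC, hμsum, sub_zero]
  exact wtt_one_sum_ne hdc hcs

theorem assoc_rep {α : (Fin d → F) → F} {x : ((Fin d → F) → F) ≃ ((Fin d → F) → F)}
    (hET : IsElusiveTriple (RMs1 F d) α x) {π : (Fin d → F) → F}
    (hπ : IsAssociate (RMs1 F d) α x π) :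
    ∃ (a : F) (u v : Fin d → F), a ≠ 0 ∧ u ≠ v ∧ π = α + dip a u v := by
  have hα : α ∈ RMs1 F d := hET.2.2.1
  have h2 : hammingDist α π = 2 := hπ.1
  rw [hammingDist_eq_wtt'] at h2
  have hsum : ∑ i, (π - α) i = 0 := by
    simp only [Pi.sub_apply]
    rw [Finset.sum_sub_distrib, RMs1_sum hα, assoc_sum_zero hET hπ.2, sub_zero]
  obtain ⟨a, u, v, ha, huv, heq⟩ := wt2_struct h2 hsum
  exact ⟨a, u, v, ha, huv, by rw [← heq]; funext i; simp⟩

theorem Rset_card_le_two :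
    (univ.filter fun m : F => m ^ 2 = m - 1).card ≤ 2 := by
  rcases (univ.filter fun m : F => m ^ 2 = m - 1).eq_empty_or_nonempty with h | ⟨m₀, hm₀⟩
  · rw [h]; simp
  · have hm₀' : m₀ ^ 2 = m₀ - 1 := (mem_filter.mp hm₀).2
    have hsub : (univ.filter fun m : F => m ^ 2 = m - 1) ⊆ {m₀, 1 - m₀} := by
      intro m hm
      have hm' : m ^ 2 = m - 1 := (mem_filter.mp hm).2
      have hfac : (m - m₀) * (m + m₀ - 1) = 0 := by linear_combination hm' - hm₀'
      simp only [mem_insert, mem_singleton]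
      rcases mul_eq_zero.mp hfac with h0 | h0
      · exact Or.inl (sub_eq_zero.mp h0)
      · exact Or.inr (by linear_combination h0)
    calc _ ≤ ({m₀, 1 - m₀} : Finset F).card := card_le_card hsub
      _ ≤ 2 := (card_insert_le _ _).trans (by simp)

theorem three_eq_zero_of_mod0 (h : Fintype.card F % 3 = 0) : (3 : F) = 0 := by
  obtain ⟨n, hp, hn⟩ := FiniteField.card F (ringChar F)
  have hdvd : 3 ∣ Fintype.card F := Nat.dvd_of_mod_eq_zero h
  rw [hn] at hdvd
  have h3p : 3 ∣ ringChar F := Nat.Prime.dvd_of_dvd_pow Nat.prime_three hdvd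
  have hpe : ringChar F = 3 := ((Nat.prime_dvd_prime_iff_eq Nat.prime_three hp).mp h3p).symm
  have := CharP.cast_eq_zero F (ringChar F)
  rw [hpe] at this
  exact_mod_cast this

theorem dvd_card_of_three_eq_zero (h : (3 : F) = 0) : 3 ∣ Fintype.card F := by
  obtain ⟨n, hp, hn⟩ := FiniteField.card F (ringChar F)
  have h3 : ((3 : ℕ) : F) = 0 := by exact_mod_cast h
  have hpd : ringChar F ∣ 3 := (CharP.cast_eq_zero_iff F (ringChar F) 3).mp h3
  have hpe : ringChar F = 3 := (Nat.prime_dvd_prime_iff_eq hp Nat.prime_three).mp hpd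
  rw [hn, hpe]
  exact dvd_pow_self 3 n.ne_zero

theorem no_root_of_mod2 (h : Fintype.card F % 3 = 2) {m : F} (hm : m ^ 2 = m - 1) :
    False := by
  have hm0 : m ≠ 0 := by
    rintro rfl
    exact one_ne_zero (α := F) (by linear_combination hm)
  have hm3 : (-m) ^ 3 = 1 := by linear_combination (-(m + 1)) * hm
  haveI : Fact (Nat.Prime 3) := ⟨Nat.prime_three⟩
  set μ : Fˣ := Units.mk0 (-m) (neg_ne_zero.mpr hm0) with hμ
  have hμ3 : μ ^ 3 = 1 := by
    apply Units.ext
    rw [Units.val_pow_eq_pow_val]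
    simpa [hμ] using hm3
  have hμ1 : μ ≠ 1 := by
    intro hone
    have hmm : -m = 1 := by
      have := congrArg Units.val hone
      simpa [hμ] using this
    have hm1 : m = -1 := by linear_combination -hmm
    rw [hm1] at hm
    have h3 : (3 : F) = 0 := by linear_combination hm
    obtain ⟨k, hk⟩ := dvd_card_of_three_eq_zero h3
    omega
  have hord : orderOf μ = 3 := orderOf_eq_prime hμ3 hμ1
  have hdvd : orderOf μ ∣ Fintype.card Fˣ := orderOf_dvd_card
  rw [hord, Fintype.card_units] at hdvd
  have hpos : 0 < Fintype.card F := Fintype.card_pos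
  obtain ⟨k, hk⟩ := hdvd
  omega

end Main
end ElusiveAux

open ElusiveAux Finset

/-- For `C = RM_q(s-1,d)`, an elusive triple `(C,α,x)` and associate `π`:
if `q ≡ 0 (mod 3)` there are at most two associates `π' ≠ π` with `MC(π,π') = 3`;
if `q ≡ 1 (mod 3)` there are at most four; and if `q ≡ 2 (mod 3)` there are none. -/
theorem stmt_19 (F : Type) [Field F] [Fintype F] [DecidableEq F] (d : ℕ) (hd : 1 ≤ d)
    (hdq : (d, Fintype.card F) ≠ (1, 2))
    (α : (Fin d → F) → F) (x : ((Fin d → F) → F) ≃ ((Fin d → F) → F))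
    (hET : IsElusiveTriple (RMs1 F d) α x)
    (π : (Fin d → F) → F) (hπ : IsAssociate (RMs1 F d) α x π) :
    (Fintype.card F % 3 = 0 →
      {π' : (Fin d → F) → F | IsAssociate (RMs1 F d) α x π' ∧ π' ≠ π ∧
        MC (RMs1 F d) π π' = 3}.ncard ≤ 2) ∧
    (Fintype.card F % 3 = 1 →
      {π' : (Fin d → F) → F | IsAssociate (RMs1 F d) α x π' ∧ π' ≠ π ∧
        MC (RMs1 F d) π π' = 3}.ncard ≤ 4) ∧
    (Fintype.card F % 3 = 2 →
      ¬ ∃ π' : (Fin d → F) → F, IsAssociate (RMs1 F d) α x π' ∧ π' ≠ π ∧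
        MC (RMs1 F d) π π' = 3) := by
  classical
  obtain ⟨a, u, v, ha, huv, hπeq⟩ := assoc_rep hET hπ
  have hα : α ∈ RMs1 F d := hET.2.2.1
  have hclass : ∀ π' : (Fin d → F) → F,
      IsAssociate (RMs1 F d) α x π' → π' ≠ π → MC (RMs1 F d) π π' = 3 →
      ∃ m c : F, m ^ 2 = m - 1 ∧ c ≠ 0 ∧
      ((π' = α + dip c (v + m • (u - v)) u ∧ m * c = -a) ∨
       (π' = α + dip c (v + m • (u - v)) v ∧ (m - 1) * c = -a)) := by
    intro π' hA' hne' hMC3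
    obtain ⟨b, p, r, hb, hpr, hπ'eq⟩ := assoc_rep hET hA'
    have hdist : 3 ≤ wtt (dip a u v - dip b p r) := by
      obtain ⟨β, hβ, hxβ⟩ := hπ.2
      obtain ⟨β', hβ', hxβ'⟩ := hA'.2
      have hbb : β ≠ β' := by
        rintro rfl
        exact hne' (hxβ'.symm.trans hxβ)
      have h3 : 3 ≤ hammingDist π π' := by
        rw [← hxβ, ← hxβ', hET.1]
        exact RMs1_mindist hβ hβ' hbb
      rw [hammingDist_eq_wtt, hπeq, hπ'eq] at h3
      have he : (α + dip a u v) - (α + dip b p r) = dip a u v - dip b p r := by ring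
      rwa [he] at h3
    have hMC3' : (RMs1 F d ∩ GammaSet π 2 ∩ GammaSet π' 2).ncard = 3 := hMC3
    obtain ⟨x1, y1, z1, hxy, hxz, hyz, hSeq⟩ := Set.ncard_eq_three.mp hMC3'
    have hαS : α ∈ RMs1 F d ∩ GammaSet π 2 ∩ GammaSet π' 2 := by
      refine ⟨⟨hα, ?_⟩, ?_⟩
      · show hammingDist π α = 2
        rw [hammingDist_eq_wtt, hπeq]
        have he : (α + dip a u v) - α = dip a u v := by ring
        rw [he, wtt_dip ha huv]
      · show hammingDist π' α = 2
        rw [hammingDist_eq_wtt, hπ'eq]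
        have he : (α + dip b p r) - α = dip b p r := by ring
        rw [he, wtt_dip hb hpr]
    have hex : ∃ β₁ β₂, β₁ ∈ RMs1 F d ∩ GammaSet π 2 ∩ GammaSet π' 2 ∧
        β₂ ∈ RMs1 F d ∩ GammaSet π 2 ∩ GammaSet π' 2 ∧ β₁ ≠ β₂ ∧ β₁ ≠ α ∧ β₂ ≠ α := by
      have hx1 : x1 ∈ RMs1 F d ∩ GammaSet π 2 ∩ GammaSet π' 2 := by rw [hSeq]; left; rfl
      have hy1 : y1 ∈ RMs1 F d ∩ GammaSet π 2 ∩ GammaSet π' 2 := by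
        rw [hSeq]; right; left; rfl
      have hz1 : z1 ∈ RMs1 F d ∩ GammaSet π 2 ∩ GammaSet π' 2 := by
        rw [hSeq]; right; right; rfl
      have hαmem := hαS
      rw [hSeq] at hαmem
      rcases hαmem with h | h | h
      · exact ⟨y1, z1, hy1, hz1, hyz, by rw [h]; exact hxy.symm, by rw [h]; exact hxz.symm⟩
      · exact ⟨x1, z1, hx1, hz1, hxz, by rw [h]; exact hxy, by rw [h]; exact hyz.symm⟩
      · exact ⟨x1, y1, hx1, hy1, hxy, by rw [h]; exact hxz, by rw [h]; exact hyz⟩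
    obtain ⟨β₁, β₂, hβ₁, hβ₂, h12, h1α, h2α⟩ := hex
    have hβ₁C : β₁ ∈ RMs1 F d := hβ₁.1.1
    have hβ₂C : β₂ ∈ RMs1 F d := hβ₂.1.1
    have hd1D : wtt ((β₁ - α) - dip a u v) = 2 := by
      have hh : hammingDist π β₁ = 2 := hβ₁.1.2
      rw [hammingDist_eq_wtt', hπeq] at hh
      have he : β₁ - (α + dip a u v) = (β₁ - α) - dip a u v := by ring
      rwa [he] at hh
    have hd1D' : wtt ((β₁ - α) - dip b p r) = 2 := by
      have hh : hammingDist π' β₁ = 2 := hβ₁.2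
      rw [hammingDist_eq_wtt', hπ'eq] at hh
      have he : β₁ - (α + dip b p r) = (β₁ - α) - dip b p r := by ring
      rwa [he] at hh
    have hd2D : wtt ((β₂ - α) - dip a u v) = 2 := by
      have hh : hammingDist π β₂ = 2 := hβ₂.1.2
      rw [hammingDist_eq_wtt', hπeq] at hh
      have he : β₂ - (α + dip a u v) = (β₂ - α) - dip a u v := by ring
      rwa [he] at hh
    have hd2D' : wtt ((β₂ - α) - dip b p r) = 2 := by
      have hh : hammingDist π' β₂ = 2 := hβ₂.2
      rw [hammingDist_eq_wtt', hπ'eq] at hh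
      have he : β₂ - (α + dip b p r) = (β₂ - α) - dip b p r := by ring
      rwa [he] at hh
    have hne12 : β₁ - α ≠ β₂ - α := fun hh => h12 (by
      have := congrArg (· + α) hh
      simpa using this)
    obtain ⟨m, c, hm2, hc, hcase⟩ :=
      core ha hb huv hpr hdist hne12 (sub_ne_zero.mpr h1α) (sub_ne_zero.mpr h2α)
        (diff_sum hβ₁C hα) (diff_mom hβ₁C hα) (diff_sum hβ₂C hα) (diff_mom hβ₂C hα)
        hd1D hd1D' hd2D hd2D'
    refine ⟨m, c, hm2, hc, ?_⟩
    rcases hcase with ⟨hD, hmc⟩ | ⟨hD, hmc⟩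
    · exact Or.inl ⟨by rw [hπ'eq, hD], hmc⟩
    · exact Or.inr ⟨by rw [hπ'eq, hD], hmc⟩
  set Rs := univ.filter fun m : F => m ^ 2 = m - 1 with hRs
  set Sfin : Finset ((Fin d → F) → F) := Rs.biUnion (fun m =>
    {α + dip (-(a / m)) (v + m • (u - v)) u,
     α + dip (-(a / (m - 1))) (v + m • (u - v)) v}) with hSfin
  set W : Set ((Fin d → F) → F) := {π' | IsAssociate (RMs1 F d) α x π' ∧ π' ≠ π ∧
    MC (RMs1 F d) π π' = 3} with hW
  have hWsub : W ⊆ ↑Sfin := by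
    intro π' hπ'
    obtain ⟨hA', hne', hMC3⟩ := hπ'
    obtain ⟨m, c, hm2, hc, hcase⟩ := hclass π' hA' hne' hMC3
    have hm0 : m ≠ 0 := by
      rintro rfl
      exact one_ne_zero (α := F) (by linear_combination hm2)
    have hm1 : m ≠ 1 := by
      rintro rfl
      exact one_ne_zero (α := F) (by linear_combination hm2)
    have hm1' : m - 1 ≠ 0 := sub_ne_zero.mpr hm1
    simp only [hSfin, Finset.coe_biUnion, Set.mem_iUnion, Finset.mem_coe]
    refine ⟨m, mem_filter.mpr ⟨mem_univ m, hm2⟩, ?_⟩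
    simp only [mem_insert, mem_singleton]
    rcases hcase with ⟨hD, hmc⟩ | ⟨hD, hmc⟩
    · left
      have hceq : c = -(a / m) := by
        field_simp
        linear_combination hmc
      rw [hD, hceq]
    · right
      have hceq : c = -(a / (m - 1)) := by
        field_simp
        linear_combination hmc
      rw [hD, hceq]
  have hcard : Sfin.card ≤ 2 * Rs.card := by
    calc Sfin.card ≤ ∑ m ∈ Rs, ({α + dip (-(a / m)) (v + m • (u - v)) u,
        α + dip (-(a / (m - 1))) (v + m • (u - v)) v} : Finset _).card :=
          Finset.card_biUnion_le
      _ ≤ ∑ _m ∈ Rs, 2 := Finset.sum_le_sum (fun m _ => (card_insert_le _ _).trans (by simp))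
      _ = 2 * Rs.card := by rw [Finset.sum_const, smul_eq_mul, mul_comm]
  have hWcard : W.ncard ≤ Sfin.card := by
    have := Set.ncard_le_ncard hWsub (Finset.finite_toSet Sfin)
    rwa [Set.ncard_coe_finset] at this
  refine ⟨?_, ?_, ?_⟩
  · intro hq0
    have h3 : (3 : F) = 0 := three_eq_zero_of_mod0 hq0
    have hRsub : Rs ⊆ {(-1 : F)} := by
      intro m hm
      have hm2 : m ^ 2 = m - 1 := (mem_filter.mp hm).2
      have hsq : (m + 1) ^ 2 = 0 := by linear_combination hm2 + m * h3
      have hm1 : m + 1 = 0 := (pow_eq_zero_iff (two_ne_zero)).mp hsq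
      simp [eq_neg_of_add_eq_zero_left hm1]
    have hR1 : Rs.card ≤ 1 := (card_le_card hRsub).trans (by simp)
    calc W.ncard ≤ Sfin.card := hWcard
      _ ≤ 2 * Rs.card := hcard
      _ ≤ 2 := by omega
  · intro _
    have hR2 : Rs.card ≤ 2 := Rset_card_le_two
    calc W.ncard ≤ Sfin.card := hWcard
      _ ≤ 2 * Rs.card := hcard
      _ ≤ 4 := by omega
  · rintro hq2 ⟨π', hA', hne', hMC3⟩
    obtain ⟨m, _, hm2, _, _⟩ := hclass π' hA' hne' hMC3
    exact no_root_of_mod2 hq2 hm2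
end
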